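/- If G is a d-regular graph on n vertices that is highly symmetric, then its Kirchhoff index satisfies R(G) = (n/d)·K, where K is the Kemeny constant. -/

import Mathlib

open Finset Matrix Polynomial

/-- The transition matrix of the simple random walk on a graph:
`P i j = 1/deg(i)` if `i ~ j`, and `0` otherwise. -/
noncomputable def transMatrix {V : Type*} [Fintype V] (G : SimpleGraph V)
    [DecidableRel G.Adj] : Matrix V V ℝ :=
  fun i j => if G.Adj i j then (1 : ℝ) / (G.degree i) else 0

/-- The stationary distribution of the simple random walk: `π i = deg(i) / (2|E|)`. -/
noncomputable def stationary {V : Type*} [Fintype V] [DecidableEq V] (G : SimpleGraph V)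
    [DecidableRel G.Adj] : V → ℝ :=
  fun i => (G.degree i : ℝ) / (2 * G.edgeFinset.card)

/-- `H` is the table of expected hitting times of the simple random walk on `G`:
`H a b = E_a T_b`.  It is characterized by `H b b = 0` and the one-step
(first-step analysis) equations `H a b = 1 + ∑_j P a j * H j b` for `a ≠ b`. -/
def IsHittingTime {V : Type*} [Fintype V] (G : SimpleGraph V) [DecidableRel G.Adj]
    (H : V → V → ℝ) : Prop :=
  (∀ b, H b b = 0) ∧ ∀ a b, a ≠ b → H a b = 1 + ∑ j, transMatrix G a j * H j b

/-- `R` is the table of effective resistances of `G` (unit resistor on each edge):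
`R a b = v a - v b` where `v` is a potential for a unit current flow from `a` to `b`,
i.e. `L v = 1_a - 1_b` for the graph Laplacian `L`. -/
def IsEffectiveResistance {V : Type*} [Fintype V] [DecidableEq V] (G : SimpleGraph V)
    [DecidableRel G.Adj] (R : V → V → ℝ) : Prop :=
  ∀ a b, ∃ v : V → ℝ,
    G.lapMatrix ℝ *ᵥ v =
      (fun x => (if x = a then (1 : ℝ) else 0) - (if x = b then (1 : ℝ) else 0)) ∧
    R a b = v a - v b

/-- Column sums of the Laplacian vanish. -/
lemma lap_col_sum {V : Type*} [Fintype V] [DecidableEq V] (G : SimpleGraph V)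
    [DecidableRel G.Adj] (j : V) : ∑ x, G.lapMatrix ℝ x j = 0 := by
  have : ∀ x, G.lapMatrix ℝ x j = G.lapMatrix ℝ j x := by
    intro x
    have h := G.isSymm_lapMatrix (R := ℝ)
    exact (Matrix.IsSymm.apply h j x)
  simp_rw [this]
  have h := congrFun (G.lapMatrix_mulVec_const_eq_zero (R := ℝ)) j
  simpa [Matrix.mulVec, dotProduct] using h

/-- The Laplacian applied to the hitting-time vector `H · b`. -/
lemma lap_hit {V : Type*} [Fintype V] [DecidableEq V] (G : SimpleGraph V)
    [DecidableRel G.Adj] (d : ℕ) (hd : (d:ℝ) ≠ 0) (hreg : G.IsRegularOfDegree d)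
    (H : V → V → ℝ) (hH : IsHittingTime G H) (b x : V) :
    (G.lapMatrix ℝ *ᵥ fun y => H y b) x
      = d - (Fintype.card V : ℝ) * d * (if x = b then 1 else 0) := by
  have hoff : ∀ x : V, x ≠ b → (G.lapMatrix ℝ *ᵥ fun y => H y b) x = d := by
    intro x hxb
    rw [SimpleGraph.lapMatrix_mulVec_apply]
    have h1 := hH.2 x b hxb
    have h2 : ∑ j, transMatrix G x j * H j b
        = (1 / (d:ℝ)) * ∑ u ∈ G.neighborFinset x, H u b := by
      rw [SimpleGraph.neighborFinset_eq_filter, Finset.sum_filter, Finset.mul_sum]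
      refine Finset.sum_congr rfl fun j _ => ?_
      by_cases hadj : G.Adj x j <;> simp [transMatrix, hadj, hreg x]
    rw [h2] at h1
    have : ∑ u ∈ G.neighborFinset x, H u b = (d:ℝ) * (H x b - 1) := by
      field_simp at h1 ⊢
      linarith
    rw [this, hreg x]
    ring
  by_cases hxb : x = b
  · subst hxb
    have hsum : ∑ y, (G.lapMatrix ℝ *ᵥ fun z => H z x) y = 0 := by
      simp_rw [Matrix.mulVec, dotProduct]
      rw [Finset.sum_comm]
      simp_rw [← Finset.sum_mul, lap_col_sum, zero_mul, Finset.sum_const_zero]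
    have hsplit := Finset.add_sum_erase Finset.univ
      (fun y => (G.lapMatrix ℝ *ᵥ fun z => H z x) y) (Finset.mem_univ x)
    have herase : ∑ y ∈ Finset.univ.erase x, (G.lapMatrix ℝ *ᵥ fun z => H z x) y
        = ((Fintype.card V : ℝ) - 1) * d := by
      rw [Finset.sum_congr rfl (fun y hy => hoff y (Finset.mem_erase.1 hy).1)]
      rw [Finset.sum_const, Finset.card_erase_of_mem (Finset.mem_univ x), Finset.card_univ]
      have hcard : 1 ≤ Fintype.card V := Fintype.card_pos_iff.2 ⟨x⟩
      rw [nsmul_eq_mul, Nat.cast_sub hcard]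
      push_cast
      ring
    have h3 : (G.lapMatrix ℝ *ᵥ fun z => H z x) x
        + ((Fintype.card V : ℝ) - 1) * d = 0 := by
      rw [← hsum, ← herase]; exact hsplit
    simp only [eq_self_iff_true, if_true, mul_one]
    linarith
  · rw [hoff x hxb]
    simp [hxb]

/-- The commute-time identity, specialized to a regular graph:
`R a b = (H a b + H b a) / (n d)`. -/
lemma commute_identity {V : Type*} [Fintype V] [DecidableEq V] (G : SimpleGraph V)
    [DecidableRel G.Adj] (hconn : G.Connected) (d : ℕ) (hd : (d:ℝ) ≠ 0)
    (hreg : G.IsRegularOfDegree d) (H : V → V → ℝ) (hH : IsHittingTime G H)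
    (R : V → V → ℝ) (hR : IsEffectiveResistance G R) (a b : V) :
    R a b = (H a b + H b a) / ((Fintype.card V : ℝ) * d) := by
  have hn : (Fintype.card V : ℝ) ≠ 0 := by
    have : 0 < Fintype.card V := Fintype.card_pos_iff.2 ⟨a⟩
    positivity
  obtain ⟨v, hv1, hv2⟩ := hR a b
  set w : V → ℝ := fun x => (H x b - H x a) / ((Fintype.card V : ℝ) * d) with hwdef
  have hw : G.lapMatrix ℝ *ᵥ w =
      (fun x => (if x = a then (1:ℝ) else 0) - (if x = b then (1:ℝ) else 0)) := by
    funext x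
    have expand : (G.lapMatrix ℝ *ᵥ w) x
        = ((G.lapMatrix ℝ *ᵥ fun y => H y b) x - (G.lapMatrix ℝ *ᵥ fun y => H y a) x)
            / ((Fintype.card V : ℝ) * d) := by
      simp only [Matrix.mulVec, dotProduct, hwdef]
      rw [← Finset.sum_sub_distrib, Finset.sum_div]
      refine Finset.sum_congr rfl fun j _ => ?_
      ring
    rw [expand, lap_hit G d hd hreg H hH b x, lap_hit G d hd hreg H hH a x]
    split_ifs with h1 h2 h2 <;> field_simp <;> ring
  have h0 : Matrix.toLin' (G.lapMatrix ℝ) (v - w) = 0 := by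
    rw [Matrix.toLin'_apply, Matrix.mulVec_sub, hv1, hw, sub_self]
  have heq := (G.lapMatrix_mulVec_eq_zero_iff_forall_reachable (x := v - w)).1 (by rwa [Matrix.toLin'_apply] at h0) a b (hconn a b)
  simp only [Pi.sub_apply] at heq
  rw [hv2]
  have hvw : v a - v b = w a - w b := by linarith
  rw [hvw, hwdef]
  simp only [hH.1 a, hH.1 b]
  ring

/-- If `G` is a `d`-regular highly symmetric graph on `n` vertices, then its
Kirchhoff index `R(G) = ∑_{i<j} R_{ij}` satisfies `R(G) = (n/d)·K`, where `K` is
the Kemeny constant. -/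
theorem kirchhoff_regular_HS {V : Type*} [Fintype V] [DecidableEq V]
    (G : SimpleGraph V) [DecidableRel G.Adj] (hconn : G.Connected)
    (d : ℕ) (hreg : G.IsRegularOfDegree d)
    (H : V → V → ℝ) (hH : IsHittingTime G H) (hHS : ∀ a b, H a b = H b a)
    (R : V → V → ℝ) (hR : IsEffectiveResistance G R)
    (K : ℝ) (hK : ∀ i, ∑ j, stationary G j * H i j = K) :
    (∑ i, ∑ j, R i j) / 2 = (Fintype.card V : ℝ) / d * K := by
  classical
  rcases subsingleton_or_nontrivial V with hs | hs
  · obtain ⟨a⟩ := hconn.nonempty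
    have hd0 : d = 0 := by
      rw [← hreg a]
      by_contra h
      obtain ⟨c, hc⟩ := G.degree_pos_iff_exists_adj a |>.1 (Nat.pos_of_ne_zero h)
      exact G.ne_of_adj hc (Subsingleton.elim a c)
    have hR0 : ∀ i j : V, R i j = 0 := by
      intro i j
      obtain ⟨v, _, hv2⟩ := hR i j
      rw [hv2, Subsingleton.elim i j, sub_self]
    simp [hR0, hd0]
  · obtain ⟨a0, b0, hab⟩ := hs
    have hdpos : 0 < d := by
      obtain ⟨p⟩ := hconn a0 b0
      cases p with
      | nil => exact absurd rfl hab
      | cons h _ =>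
        rw [← hreg a0]
        exact G.degree_pos_iff_exists_adj a0 |>.2 ⟨_, h⟩
    have hd : (d:ℝ) ≠ 0 := by positivity
    have hn : (Fintype.card V : ℝ) ≠ 0 := by
      have : 0 < Fintype.card V := Fintype.card_pos_iff.2 ⟨a0⟩
      positivity
    have hhs : (2 * G.edgeFinset.card : ℝ) = (Fintype.card V : ℝ) * d := by
      have h := G.sum_degrees_eq_twice_card_edges
      have h2 : ∑ v, G.degree v = Fintype.card V * d := by
        simp [hreg _, Finset.sum_const, Finset.card_univ, Nat.mul_comm]
      rw [h2] at h
      exact_mod_cast h.symm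
    have hstat : ∀ j : V, stationary G j = 1 / (Fintype.card V : ℝ) := by
      intro j
      rw [stationary]
      simp only [hreg j]
      rw [show ((2:ℝ) * G.edgeFinset.card) = (Fintype.card V : ℝ) * d by exact_mod_cast hhs]
      field_simp
    have hsumH : ∀ i, ∑ j, H i j = (Fintype.card V : ℝ) * K := by
      intro i
      have h := hK i
      simp_rw [hstat, div_mul_eq_mul_div, one_mul] at h
      rw [← Finset.sum_div] at h
      field_simp at h
      linarith
    have hRval : ∀ i j, R i j = 2 * H i j / ((Fintype.card V : ℝ) * d) := by
      intro i j
      rw [commute_identity G hconn d hd hreg H hH R hR i j, hHS j i]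
      ring
    have hsum : ∑ i, ∑ j, R i j
        = (Fintype.card V : ℝ) * (2 * ((Fintype.card V : ℝ) * K) / ((Fintype.card V : ℝ) * d)) := by
      have inner : ∀ i, ∑ j, R i j
          = 2 * ((Fintype.card V : ℝ) * K) / ((Fintype.card V : ℝ) * d) := by
        intro i
        simp_rw [hRval i]
        rw [← Finset.sum_div, ← Finset.mul_sum, hsumH i]
      simp_rw [inner]
      rw [Finset.sum_const, Finset.card_univ, nsmul_eq_mul]
    rw [hsum]
    field_simp
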